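/- Let p be a prime, K = F_p(t), R = K[x], and p = (x^p − t), a maximal ideal of R. Then every K-linear differential operator on R of order ≤ p−1 maps p into p. Consequently, for any finite set 𝔄 of K-linear differential operators on R of order ≤ p−1, the set {f ∈ R : δ(f) ∈ p for all δ ∈ 𝔄} contains p and hence cannot equal p². -/

import Mathlib

/-- The commutator `[δ, r] = δ ∘ (r • ·) - r • δ` of an `A`-linear map `δ : M → N`
with multiplication by `r ∈ R`. -/
def commutatorSMul {R A M N : Type*} [CommRing R] [CommRing A] [Algebra A R]
    [AddCommGroup M] [Module R M] [AddCommGroup N] [Module R N]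
    [Module A M] [Module A N] [IsScalarTower A R M] [IsScalarTower A R N]
    (δ : M →ₗ[A] N) (r : R) : M →ₗ[A] N where
  toFun w := δ (r • w) - r • δ w
  map_add' x y := by simp only [smul_add, map_add]; abel
  map_smul' a x := by
    simp only [RingHom.id_apply]
    rw [← smul_comm a r x]
    simp only [map_smul]
    rw [← smul_comm a r (δ x), ← smul_sub]

/-- `IsDiffOp m δ` says that `δ` is an `A`-linear differential operator of order at
most `m` relative to the `R`-module structures: `Diff⁰ = Hom_R(M,N)`, and
`δ ∈ Diffᵐ` iff `[δ, r] ∈ Diffᵐ⁻¹` for all `r ∈ R`. -/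
def IsDiffOp (R : Type*) {A M N : Type*} [CommRing R] [CommRing A] [Algebra A R]
    [AddCommGroup M] [Module R M] [AddCommGroup N] [Module R N]
    [Module A M] [Module A N] [IsScalarTower A R M] [IsScalarTower A R N] :
    ℕ → (M →ₗ[A] N) → Prop
  | 0, δ => ∀ (r : R) (w : M), δ (r • w) = r • δ w
  | m + 1, δ => ∀ r : R, IsDiffOp R m (commutatorSMul δ r)

section Aux
variable {A R : Type*} [CommRing A] [CommRing R] [Algebra A R]

noncomputable def adOp (A : Type*) {R : Type*} [CommRing A] [CommRing R] [Algebra A R]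
    (r : R) : Module.End A (Module.End A R) :=
  LinearMap.mulRight A (Algebra.lmul A R r) - LinearMap.mulLeft A (Algebra.lmul A R r)

lemma adOp_apply (r : R) (δ : Module.End A R) : adOp A r δ = commutatorSMul δ r := by
  ext w
  simp [adOp, commutatorSMul, LinearMap.sub_apply, Module.End.mul_apply, smul_eq_mul, mul_comm]

lemma commutatorSMul_eq_zero {δ : Module.End A R} (h : IsDiffOp R 0 δ) (r : R) :
    commutatorSMul δ r = 0 := by
  ext w
  have := h r w
  simp only [smul_eq_mul] at this
  simp [commutatorSMul, this]

lemma adOp_iter {m : ℕ} {δ : Module.End A R} (h : IsDiffOp R m δ) (r : R) :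
    (adOp A r ^ (m + 1)) δ = 0 := by
  induction m generalizing δ with
  | zero => rw [pow_one, adOp_apply, commutatorSMul_eq_zero h]
  | succ m ih =>
      rw [pow_succ, Module.End.mul_apply, adOp_apply]
      exact ih (h r)

end Aux

section CharAux
variable {A R : Type*} [Field A] [CommRing R] [Nontrivial R] [Algebra A R]

lemma commutatorSMul_pow_char (p : ℕ) [Fact p.Prime] [CharP A p]
    {δ : Module.End A R} (h : IsDiffOp R (p - 1) δ) (r : R) :
    commutatorSMul δ (r ^ p) = 0 := by
  haveI : CharP (Module.End A (Module.End A R)) p :=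
    charP_of_injective_algebraMap' A p
  have key : adOp A (r ^ p) = adOp A r ^ p := by
    unfold adOp
    rw [sub_pow_char_of_commute (R := Module.End A (Module.End A R)) p ((LinearMap.commute_mulLeft_right _ _).symm),
      LinearMap.pow_mulRight, LinearMap.pow_mulLeft, map_pow]
  have h2 : (adOp A r ^ ((p - 1) + 1)) δ = 0 := adOp_iter h r
  rw [Nat.sub_add_cancel (Fact.out : p.Prime).one_le] at h2
  rw [← adOp_apply, key, h2]

end CharAux

/-- let `K = 𝔽_p(t)`, `R = K[x]` and `𝔭 = (x^p − t)`, a maximal ideal of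
`R`.  Every `K`-linear differential operator on `R` of order `≤ p−1` maps `𝔭` into
`𝔭`.  Consequently, for any finite set `𝔄` of `K`-linear differential operators of
order `≤ p−1`, the set `{f : δ(f) ∈ 𝔭 ∀ δ ∈ 𝔄}` contains `𝔭`, hence cannot equal
`𝔭²`. -/
theorem inseparable_example (p : ℕ) [Fact p.Prime] :
    let K := RatFunc (ZMod p)
    let t : K := RatFunc.X
    let P : Ideal (Polynomial K) := Ideal.span {Polynomial.X ^ p - Polynomial.C t}
    (∀ δ : Polynomial K →ₗ[K] Polynomial K,
      IsDiffOp (Polynomial K) (p - 1) δ → ∀ f ∈ P, δ f ∈ P) ∧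
    (∀ 𝔄 : Finset (Polynomial K →ₗ[K] Polynomial K),
      (∀ δ ∈ 𝔄, IsDiffOp (Polynomial K) (p - 1) δ) →
        (∀ f ∈ P, ∀ δ ∈ 𝔄, δ f ∈ P) ∧
        {f : Polynomial K | ∀ δ ∈ 𝔄, δ f ∈ P} ≠ ((P ^ 2 : Ideal (Polynomial K)) : Set (Polynomial K))) := by
  intro K t P
  haveI : CharP K p := charP_of_injective_algebraMap' (ZMod p) p
  set g : Polynomial K := Polynomial.X ^ p - Polynomial.C t with hg_def
  have key : ∀ δ : Polynomial K →ₗ[K] Polynomial K,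
      IsDiffOp (Polynomial K) (p - 1) δ → ∀ f ∈ P, δ f ∈ P := by
    intro δ hδ f hf
    obtain ⟨c, rfl⟩ := Ideal.mem_span_singleton'.mp hf
    have hX : commutatorSMul δ ((Polynomial.X : Polynomial K) ^ p) = 0 :=
      commutatorSMul_pow_char p hδ _
    have hC : commutatorSMul δ (Polynomial.C t) = 0 := by
      refine LinearMap.ext fun w => ?_
      have hcw : (Polynomial.C t) • w = t • w := by
        rw [← Polynomial.algebraMap_eq, algebraMap_smul]
      have hcd : (Polynomial.C t) • δ w = t • δ w := by
        rw [← Polynomial.algebraMap_eq, algebraMap_smul]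
      show δ ((Polynomial.C t) • w) - (Polynomial.C t) • δ w = 0
      rw [hcw, hcd, map_smul, sub_self]
    have hg : commutatorSMul δ g = 0 := by
      refine LinearMap.ext fun w => ?_
      have h1 := LinearMap.congr_fun hX w
      have h2 := LinearMap.congr_fun hC w
      simp only [commutatorSMul, LinearMap.coe_mk, AddHom.coe_mk, LinearMap.zero_apply] at h1 h2 ⊢
      rw [hg_def, sub_smul, map_sub, sub_smul]
      rw [sub_eq_zero] at h1 h2
      rw [h1, h2]
      abel
    have hgc := LinearMap.congr_fun hg c
    simp only [commutatorSMul, LinearMap.coe_mk, AddHom.coe_mk, LinearMap.zero_apply,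
      smul_eq_mul, sub_eq_zero] at hgc
    refine Ideal.mem_span_singleton'.mpr ⟨δ c, ?_⟩
    rw [mul_comm c g, hgc, mul_comm]
  refine ⟨key, fun 𝔄 h𝔄 => ⟨fun f hf δ hδ => key δ (h𝔄 δ hδ) f hf, ?_⟩⟩
  intro hEq
  have hg_mem : g ∈ {f : Polynomial K | ∀ δ ∈ 𝔄, δ f ∈ P} :=
    fun δ hδ => key δ (h𝔄 δ hδ) _ (Ideal.mem_span_singleton_self _)
  rw [hEq] at hg_mem
  have hmem : g ∈ (P ^ 2 : Ideal (Polynomial K)) := hg_mem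
  rw [show (P ^ 2 : Ideal (Polynomial K)) = Ideal.span {g ^ 2} by
    rw [Ideal.span_singleton_pow]] at hmem
  obtain ⟨c, hc⟩ := Ideal.mem_span_singleton.mp hmem
  have hp0 : p ≠ 0 := (Fact.out : p.Prime).ne_zero
  have hne : g ≠ 0 := (Polynomial.monic_X_pow_sub_C t hp0).ne_zero
  have hunit : IsUnit g := by
    apply IsUnit.of_mul_eq_one c
    apply mul_left_cancel₀ hne
    rw [mul_one, ← mul_assoc, ← sq]
    exact hc.symm
  have hdeg := Polynomial.natDegree_eq_zero_of_isUnit hunit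
  rw [hg_def, Polynomial.natDegree_X_pow_sub_C] at hdeg
  exact hp0 hdeg
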